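/- The function x(τ) = (1/(2τ), (1−3τ²)/(2τ(1+τ²)), (1+3τ²)/(2τ(1−τ²))) is a solution of the permutation-symmetric system ẋᵢ = xᵢ² − (x₁x₂+x₂x₃+x₃x₁), i = 1,2,3, on any domain avoiding its poles. Moreover P₁P₂P₃ is a first integral of this system, where Pᵢ := 3xᵢ² − x₁x₂ − x₂x₃ − x₃x₁. -/

import Mathlib

/-- an explicit rational solution of the permutation-symmetric
system `ẋᵢ = xᵢ² − (x₁x₂+x₂x₃+x₃x₁)`, and the first integral `P₁P₂P₃`. -/
theorem stmt_17 (x₁ x₂ x₃ : ℂ → ℂ)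
    (hx₁ : ∀ s, x₁ s = 1 / (2 * s))
    (hx₂ : ∀ s, x₂ s = (1 - 3 * s ^ 2) / (2 * s * (1 + s ^ 2)))
    (hx₃ : ∀ s, x₃ s = (1 + 3 * s ^ 2) / (2 * s * (1 - s ^ 2)))
    (τ : ℂ) (hτ0 : τ ≠ 0) (h1 : 1 + τ ^ 2 ≠ 0) (h2 : 1 - τ ^ 2 ≠ 0) :
    (HasDerivAt x₁ ((x₁ τ) ^ 2 - (x₁ τ * x₂ τ + x₂ τ * x₃ τ + x₃ τ * x₁ τ)) τ ∧
     HasDerivAt x₂ ((x₂ τ) ^ 2 - (x₁ τ * x₂ τ + x₂ τ * x₃ τ + x₃ τ * x₁ τ)) τ ∧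
     HasDerivAt x₃ ((x₃ τ) ^ 2 - (x₁ τ * x₂ τ + x₂ τ * x₃ τ + x₃ τ * x₁ τ)) τ) ∧
    (∀ (y₁ y₂ y₃ : ℂ → ℂ) (σ : ℂ),
      HasDerivAt y₁ ((y₁ σ) ^ 2 - (y₁ σ * y₂ σ + y₂ σ * y₃ σ + y₃ σ * y₁ σ)) σ →
      HasDerivAt y₂ ((y₂ σ) ^ 2 - (y₁ σ * y₂ σ + y₂ σ * y₃ σ + y₃ σ * y₁ σ)) σ →
      HasDerivAt y₃ ((y₃ σ) ^ 2 - (y₁ σ * y₂ σ + y₂ σ * y₃ σ + y₃ σ * y₁ σ)) σ →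
      HasDerivAt (fun s =>
        (3 * (y₁ s) ^ 2 - (y₁ s * y₂ s + y₂ s * y₃ s + y₃ s * y₁ s))
        * (3 * (y₂ s) ^ 2 - (y₁ s * y₂ s + y₂ s * y₃ s + y₃ s * y₁ s))
        * (3 * (y₃ s) ^ 2 - (y₁ s * y₂ s + y₂ s * y₃ s + y₃ s * y₁ s))) 0 σ) := by
  have hf₁ : x₁ = fun s => 1 / (2 * s) := funext hx₁
  have hf₂ : x₂ = fun s => (1 - 3 * s ^ 2) / (2 * s * (1 + s ^ 2)) := funext hx₂
  have hf₃ : x₃ = fun s => (1 + 3 * s ^ 2) / (2 * s * (1 - s ^ 2)) := funext hx₃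
  subst hf₁ hf₂ hf₃
  have h2τ : (2 : ℂ) * τ ≠ 0 := mul_ne_zero two_ne_zero hτ0
  have hd1 : (2 : ℂ) * τ * (1 + τ ^ 2) ≠ 0 := mul_ne_zero h2τ h1
  have hd2 : (2 : ℂ) * τ * (1 - τ ^ 2) ≠ 0 := mul_ne_zero h2τ h2
  have hA : (2 : ℂ) * τ * (2 * τ * (1 + τ ^ 2)) ≠ 0 := mul_ne_zero h2τ hd1
  have hB : (2 : ℂ) * τ * (1 + τ ^ 2) * (2 * τ * (1 - τ ^ 2)) ≠ 0 :=
    mul_ne_zero hd1 hd2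
  have hC : (2 : ℂ) * τ * (1 - τ ^ 2) * (2 * τ) ≠ 0 := mul_ne_zero hd2 h2τ
  have hden : HasDerivAt (fun s : ℂ => 2 * s) 2 τ := by
    simpa using (hasDerivAt_id τ).const_mul (2 : ℂ)
  have hsq : HasDerivAt (fun s : ℂ => s ^ 2) (2 * τ) τ := by
    simpa using hasDerivAt_pow 2 τ
  have hden1 := hden.mul ((hasDerivAt_const τ (1 : ℂ)).add hsq)
  have hden2 := hden.mul ((hasDerivAt_const τ (1 : ℂ)).sub hsq)
  have hnum1 : HasDerivAt (fun s : ℂ => 1 - 3 * s ^ 2) (0 - 3 * (2 * τ)) τ :=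
    (hasDerivAt_const τ (1 : ℂ)).sub (hsq.const_mul 3)
  have hnum2 : HasDerivAt (fun s : ℂ => 1 + 3 * s ^ 2) (0 + 3 * (2 * τ)) τ :=
    (hasDerivAt_const τ (1 : ℂ)).add (hsq.const_mul 3)
  constructor
  · refine ⟨?_, ?_, ?_⟩
    · have H := (hasDerivAt_const τ (1 : ℂ)).div hden h2τ
      refine H.congr_deriv (Eq.symm ?_)
      simp only [div_mul_div_comm, one_mul, mul_one, div_pow, one_pow, Pi.mul_apply, Pi.add_apply, Pi.sub_apply]
      rw [div_add_div _ _ hA hB, div_add_div _ _ (mul_ne_zero hA hB) hC,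
        div_sub_div _ _ (pow_ne_zero 2 h2τ) (mul_ne_zero (mul_ne_zero hA hB) hC),
        div_eq_div_iff (mul_ne_zero (pow_ne_zero 2 h2τ)
          (mul_ne_zero (mul_ne_zero hA hB) hC)) (pow_ne_zero 2 h2τ)]
      ring
    · have H := hnum1.div hden1 hd1
      refine H.congr_deriv (Eq.symm ?_)
      simp only [div_mul_div_comm, one_mul, mul_one, div_pow, one_pow, Pi.mul_apply, Pi.add_apply, Pi.sub_apply]
      rw [div_add_div _ _ hA hB, div_add_div _ _ (mul_ne_zero hA hB) hC,
        div_sub_div _ _ (pow_ne_zero 2 hd1) (mul_ne_zero (mul_ne_zero hA hB) hC),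
        div_eq_div_iff (mul_ne_zero (pow_ne_zero 2 hd1)
          (mul_ne_zero (mul_ne_zero hA hB) hC)) (pow_ne_zero 2 hd1)]
      ring
    · have H := hnum2.div hden2 hd2
      refine H.congr_deriv (Eq.symm ?_)
      simp only [div_mul_div_comm, one_mul, mul_one, div_pow, one_pow, Pi.mul_apply, Pi.add_apply, Pi.sub_apply]
      rw [div_add_div _ _ hA hB, div_add_div _ _ (mul_ne_zero hA hB) hC,
        div_sub_div _ _ (pow_ne_zero 2 hd2) (mul_ne_zero (mul_ne_zero hA hB) hC),
        div_eq_div_iff (mul_ne_zero (pow_ne_zero 2 hd2)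
          (mul_ne_zero (mul_ne_zero hA hB) hC)) (pow_ne_zero 2 hd2)]
      ring
  · intro y₁ y₂ y₃ σ hy₁ hy₂ hy₃
    have hP₁ := ((hy₁.pow 2).const_mul 3).sub
      (((hy₁.mul hy₂).add (hy₂.mul hy₃)).add (hy₃.mul hy₁))
    have hP₂ := ((hy₂.pow 2).const_mul 3).sub
      (((hy₁.mul hy₂).add (hy₂.mul hy₃)).add (hy₃.mul hy₁))
    have hP₃ := ((hy₃.pow 2).const_mul 3).sub
      (((hy₁.mul hy₂).add (hy₂.mul hy₃)).add (hy₃.mul hy₁))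
    have H := (hP₁.mul hP₂).mul hP₃
    refine H.congr_deriv (Eq.symm ?_)
    simp only [Pi.mul_apply, Pi.add_apply, Pi.sub_apply, Pi.pow_apply]
    ring
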